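/- arXiv:1405.0235 — 3 statements merged into one kernel-verified Lean document; each statement's English description precedes it below -/
import Mathlib

section
/- Let α > 0 and let f, g ∈ L²([0,1];ℝ). Then the function (x,t) ↦ f(x) g(t) (x−t)_+^{α−1} is integrable on [0,1]², and the fractional integration-by-parts formula holds: ∫_0^1 f(x)·(I^α_{0+} g)(x) dx = ∫_0^1 (I^α_{1−} f)(t)·g(t) dt, i.e. (1/Γ(α)) ∫_0^1 f(x) (∫_0^x g(t)(x−t)^{α−1} dt) dx = (1/Γ(α)) ∫_0^1 g(t) (∫_t^1 f(x)(x−t)^{α−1} dx) dt. -/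
set_option maxHeartbeats 1000000
open MeasureTheory Real Set

noncomputable def PHI (α : ℝ) : ℝ → ℝ := fun u => max u 0 ^ (α - 1)
noncomputable def PSI (α : ℝ) : ℝ → ℝ := fun u => if 0 < u then u ^ (α - 1) else 0

lemma PHI_nonneg (α u : ℝ) : 0 ≤ PHI α u := Real.rpow_nonneg (le_max_right _ _) _

lemma PSI_nonneg (α u : ℝ) : 0 ≤ PSI α u := by
  unfold PSI; split
  · exact Real.rpow_nonneg (le_of_lt ‹_›) _
  · exact le_refl _

lemma measurable_PHI (α : ℝ) : Measurable (PHI α) := by unfold PHI; fun_prop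

lemma measurable_PSI (α : ℝ) : Measurable (PSI α) := by
  unfold PSI
  exact Measurable.ite measurableSet_Ioi (by fun_prop) measurable_const

lemma PSI_le_PHI (α u : ℝ) : PSI α u ≤ PHI α u := by
  unfold PSI PHI
  split
  · rw [max_eq_left (le_of_lt ‹_›)]
  · exact Real.rpow_nonneg (le_max_right _ _) _

lemma abs_PSI_le_PHI (α u : ℝ) : |PSI α u| ≤ PHI α u := by
  rw [abs_of_nonneg (PSI_nonneg α u)]; exact PSI_le_PHI α u

-- interval integrability of PHI
lemma integrableOn_PHI_Icc (α : ℝ) (hα : 0 < α) (a b : ℝ) :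
    IntegrableOn (PHI α) (Icc a b) := by
  have h1 : IntegrableOn (PHI α) (Icc a b ∩ Iic 0) := by
    have : EqOn (PHI α) (fun _ => (0:ℝ) ^ (α - 1)) (Icc a b ∩ Iic 0) := by
      intro u hu
      simp only [PHI]
      rw [max_eq_right hu.2]
    have hc : IntegrableOn (fun _ : ℝ => (0:ℝ) ^ (α - 1)) (Icc a b ∩ Iic 0) := by
      apply (integrableOn_const_iff enorm_ne_top).2
      right
      exact lt_of_le_of_lt (measure_mono inter_subset_left) measure_Icc_lt_top
    exact hc.congr_fun this.symm (measurableSet_Icc.inter measurableSet_Iic)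
  have h2 : IntegrableOn (PHI α) (Icc a b ∩ Ici 0) := by
    have hsub : Icc a b ∩ Ici 0 ⊆ Icc 0 (max b 0) := by
      intro u hu
      exact ⟨hu.2, le_max_of_le_left hu.1.2⟩
    have hr : IntegrableOn (fun u : ℝ => u ^ (α - 1)) (Icc 0 (max b 0)) := by
      rw [← intervalIntegrable_iff_integrableOn_Icc_of_le (le_max_right b 0)]
      exact intervalIntegral.intervalIntegrable_rpow' (by linarith)
    have : EqOn (PHI α) (fun u : ℝ => u ^ (α - 1)) (Icc a b ∩ Ici 0) := by
      intro u hu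
      simp only [PHI]
      rw [max_eq_left hu.2]
    exact ((hr.mono_set hsub).congr_fun this.symm
      (measurableSet_Icc.inter measurableSet_Ici))
  have h := h1.union h2
  apply h.mono_set
  intro u hu
  rcases le_total u 0 with h0 | h0
  · exact Or.inl ⟨hu, h0⟩
  · exact Or.inr ⟨hu, h0⟩

lemma intervalIntegrable_PHI (α : ℝ) (hα : 0 < α) (a b : ℝ) :
    IntervalIntegrable (PHI α) volume a b := by
  rcases le_total a b with h | h
  · rw [intervalIntegrable_iff_integrableOn_Icc_of_le h]
    exact integrableOn_PHI_Icc α hα a b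
  · exact ((intervalIntegrable_iff_integrableOn_Icc_of_le h).2
      (integrableOn_PHI_Icc α hα b a)).symm

lemma slice_t (α : ℝ) (hα : 0 < α) (x : ℝ) :
    IntegrableOn (fun t => PHI α (x - t)) (Icc (0:ℝ) 1) := by
  rw [← intervalIntegrable_iff_integrableOn_Icc_of_le (zero_le_one)]
  have := (intervalIntegrable_PHI α hα x (x - 1)).comp_sub_left x
  simpa using this

lemma slice_x (α : ℝ) (hα : 0 < α) (t : ℝ) :
    IntegrableOn (fun x => PHI α (x - t)) (Icc (0:ℝ) 1) := by
  rw [← intervalIntegrable_iff_integrableOn_Icc_of_le (zero_le_one)]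
  have := (intervalIntegrable_PHI α hα (0 - t) (1 - t)).comp_sub_right t
  simpa using this

noncomputable def CC (α : ℝ) : ℝ := ∫ u in Icc (-1:ℝ) 1, PHI α u

lemma bound_t (α : ℝ) (hα : 0 < α) (x : ℝ) (hx : x ∈ Icc (0:ℝ) 1) :
    ∫ t in Icc (0:ℝ) 1, PHI α (x - t) ≤ CC α := by
  have h1 : ∫ t in Icc (0:ℝ) 1, PHI α (x - t) = ∫ t in (0:ℝ)..1, PHI α (x - t) := by
    rw [intervalIntegral.integral_of_le zero_le_one, integral_Icc_eq_integral_Ioc]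
  rw [h1, intervalIntegral.integral_comp_sub_left (PHI α) x]
  have h2 : ∫ u in (x - 1)..(x - 0), PHI α u = ∫ u in Ioc (x-1) (x-0), PHI α u := by
    rw [intervalIntegral.integral_of_le (by linarith)]
  rw [h2]
  apply setIntegral_mono_set (integrableOn_PHI_Icc α hα (-1) 1)
  · exact Filter.Eventually.of_forall fun u => PHI_nonneg α u
  · apply HasSubset.Subset.eventuallyLE
    intro u hu
    exact ⟨by linarith [hu.1, hx.2, hx.1], by linarith [hu.2, hx.2]⟩

lemma bound_x (α : ℝ) (hα : 0 < α) (t : ℝ) (ht : t ∈ Icc (0:ℝ) 1) :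
    ∫ x in Icc (0:ℝ) 1, PHI α (x - t) ≤ CC α := by
  have h1 : ∫ x in Icc (0:ℝ) 1, PHI α (x - t) = ∫ x in (0:ℝ)..1, PHI α (x - t) := by
    rw [intervalIntegral.integral_of_le zero_le_one, integral_Icc_eq_integral_Ioc]
  rw [h1, intervalIntegral.integral_comp_sub_right (PHI α) t]
  have h2 : ∫ u in (0 - t)..(1 - t), PHI α u = ∫ u in Ioc (0-t) (1-t), PHI α u := by
    rw [intervalIntegral.integral_of_le (by linarith)]
  rw [h2]
  apply setIntegral_mono_set (integrableOn_PHI_Icc α hα (-1) 1)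
  · exact Filter.Eventually.of_forall fun u => PHI_nonneg α u
  · apply HasSubset.Subset.eventuallyLE
    intro u hu
    exact ⟨by linarith [hu.1, ht.2], by linarith [hu.2, ht.1]⟩

lemma sq_prod_left (α : ℝ) (hα : 0 < α) (f : ℝ → ℝ)
    (hf : MemLp f 2 (volume.restrict (Icc (0:ℝ) 1))) :
    Integrable (fun p : ℝ × ℝ => f p.1 ^ 2 * PHI α (p.1 - p.2))
      ((volume.restrict (Icc (0:ℝ) 1)).prod (volume.restrict (Icc (0:ℝ) 1))) := by
  set μ := volume.restrict (Icc (0:ℝ) 1) with hμ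
  have hfm : AEMeasurable f μ := hf.aestronglyMeasurable.aemeasurable
  have hmeas : AEStronglyMeasurable (fun p : ℝ × ℝ => f p.1 ^ 2 * PHI α (p.1 - p.2))
      (μ.prod μ) := by
    apply AEMeasurable.aestronglyMeasurable
    exact (hfm.comp_fst.pow_const 2).mul
      (((measurable_PHI α).comp (measurable_fst.sub measurable_snd)).aemeasurable)
  rw [integrable_prod_iff hmeas]
  constructor
  · refine Filter.Eventually.of_forall fun x => ?_
    show Integrable (fun t => f x ^ 2 * PHI α (x - t)) μ
    exact (slice_t α hα x).const_mul _
  · apply Integrable.mono' ((hf.integrable_sq).mul_const (CC α)) hmeas.norm.integral_prod_right'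
    filter_upwards [ae_restrict_mem measurableSet_Icc] with x hx
    have h0 : ∀ t, ‖f x ^ 2 * PHI α (x - t)‖ = f x ^ 2 * PHI α (x - t) := by
      intro t
      rw [Real.norm_eq_abs, abs_of_nonneg (mul_nonneg (sq_nonneg _) (PHI_nonneg _ _))]
    have h1 : (∫ t, ‖f x ^ 2 * PHI α (x - t)‖ ∂μ) = f x ^ 2 * ∫ t, PHI α (x - t) ∂μ := by
      simp_rw [h0]
      exact integral_const_mul _ _
    rw [Real.norm_eq_abs, h1, abs_of_nonneg (mul_nonneg (sq_nonneg _)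
      (integral_nonneg fun t => PHI_nonneg _ _))]
    exact mul_le_mul_of_nonneg_left (bound_t α hα x hx) (sq_nonneg _)

lemma sq_prod_right (α : ℝ) (hα : 0 < α) (g : ℝ → ℝ)
    (hg : MemLp g 2 (volume.restrict (Icc (0:ℝ) 1))) :
    Integrable (fun p : ℝ × ℝ => g p.2 ^ 2 * PHI α (p.1 - p.2))
      ((volume.restrict (Icc (0:ℝ) 1)).prod (volume.restrict (Icc (0:ℝ) 1))) := by
  set μ := volume.restrict (Icc (0:ℝ) 1) with hμ
  have hgm : AEMeasurable g μ := hg.aestronglyMeasurable.aemeasurable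
  have hmeas : AEStronglyMeasurable (fun p : ℝ × ℝ => g p.2 ^ 2 * PHI α (p.1 - p.2))
      (μ.prod μ) := by
    apply AEMeasurable.aestronglyMeasurable
    exact (hgm.comp_snd.pow_const 2).mul
      (((measurable_PHI α).comp (measurable_fst.sub measurable_snd)).aemeasurable)
  rw [integrable_prod_iff' hmeas]
  constructor
  · refine Filter.Eventually.of_forall fun t => ?_
    show Integrable (fun x => g t ^ 2 * PHI α (x - t)) μ
    exact (slice_x α hα t).const_mul _
  · apply Integrable.mono' ((hg.integrable_sq).mul_const (CC α)) hmeas.norm.prod_swap.integral_prod_right'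
    filter_upwards [ae_restrict_mem measurableSet_Icc] with t ht
    simp only [Prod.swap_prod_mk, Real.norm_eq_abs]
    have h0 : ∀ x : ℝ, |g t ^ 2 * PHI α (x - t)| = g t ^ 2 * PHI α (x - t) := by
      intro x
      rw [abs_of_nonneg (mul_nonneg (sq_nonneg _) (PHI_nonneg _ _))]
    have h1 : (∫ x, |g t ^ 2 * PHI α (x - t)| ∂μ) = g t ^ 2 * ∫ x, PHI α (x - t) ∂μ := by
      simp_rw [h0]
      exact integral_const_mul _ _
    rw [h1, abs_of_nonneg (mul_nonneg (sq_nonneg _)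
      (integral_nonneg fun x => PHI_nonneg _ _))]
    exact mul_le_mul_of_nonneg_left (bound_x α hα t ht) (sq_nonneg _)

lemma kernel_int (α : ℝ) (hα : 0 < α) (f g : ℝ → ℝ)
    (hf : MemLp f 2 (volume.restrict (Icc (0:ℝ) 1)))
    (hg : MemLp g 2 (volume.restrict (Icc (0:ℝ) 1))) :
    Integrable (fun p : ℝ × ℝ => f p.1 * g p.2 * PHI α (p.1 - p.2))
      ((volume.restrict (Icc (0:ℝ) 1)).prod (volume.restrict (Icc (0:ℝ) 1))) := by
  set μ := volume.restrict (Icc (0:ℝ) 1) with hμ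
  have hfm : AEMeasurable f μ := hf.aestronglyMeasurable.aemeasurable
  have hgm : AEMeasurable g μ := hg.aestronglyMeasurable.aemeasurable
  have hmeas : AEStronglyMeasurable (fun p : ℝ × ℝ => f p.1 * g p.2 * PHI α (p.1 - p.2))
      (μ.prod μ) := by
    apply AEMeasurable.aestronglyMeasurable
    exact (hfm.comp_fst.mul hgm.comp_snd).mul
      (((measurable_PHI α).comp (measurable_fst.sub measurable_snd)).aemeasurable)
  have hB : Integrable (fun p : ℝ × ℝ =>
      (1/2 : ℝ) * (f p.1 ^ 2 * PHI α (p.1 - p.2) + g p.2 ^ 2 * PHI α (p.1 - p.2)))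
      (μ.prod μ) := ((sq_prod_left α hα f hf).add (sq_prod_right α hα g hg)).const_mul _
  apply Integrable.mono' hB hmeas
  refine Filter.Eventually.of_forall fun p => ?_
  have habs : |f p.1 * g p.2| ≤ (f p.1 ^ 2 + g p.2 ^ 2) / 2 := by
    rw [abs_mul]
    nlinarith [sq_abs (f p.1), sq_abs (g p.2), sq_nonneg (|f p.1| - |g p.2|), abs_nonneg (f p.1), abs_nonneg (g p.2)]
  have h1 : ‖f p.1 * g p.2 * PHI α (p.1 - p.2)‖ = |f p.1 * g p.2| * PHI α (p.1 - p.2) := by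
    rw [Real.norm_eq_abs, abs_mul, abs_of_nonneg (PHI_nonneg _ _)]
  rw [h1]
  calc |f p.1 * g p.2| * PHI α (p.1 - p.2)
      ≤ ((f p.1 ^ 2 + g p.2 ^ 2) / 2) * PHI α (p.1 - p.2) :=
        mul_le_mul_of_nonneg_right habs (PHI_nonneg _ _)
    _ = (1/2 : ℝ) * (f p.1 ^ 2 * PHI α (p.1 - p.2) + g p.2 ^ 2 * PHI α (p.1 - p.2)) := by ring

lemma kernelPSI_int (α : ℝ) (hα : 0 < α) (f g : ℝ → ℝ)
    (hf : MemLp f 2 (volume.restrict (Icc (0:ℝ) 1)))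
    (hg : MemLp g 2 (volume.restrict (Icc (0:ℝ) 1))) :
    Integrable (fun p : ℝ × ℝ => f p.1 * g p.2 * PSI α (p.1 - p.2))
      ((volume.restrict (Icc (0:ℝ) 1)).prod (volume.restrict (Icc (0:ℝ) 1))) := by
  set μ := volume.restrict (Icc (0:ℝ) 1) with hμ
  have hfm : AEMeasurable f μ := hf.aestronglyMeasurable.aemeasurable
  have hgm : AEMeasurable g μ := hg.aestronglyMeasurable.aemeasurable
  have hmeas : AEStronglyMeasurable (fun p : ℝ × ℝ => f p.1 * g p.2 * PSI α (p.1 - p.2))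
      (μ.prod μ) := by
    apply AEMeasurable.aestronglyMeasurable
    exact (hfm.comp_fst.mul hgm.comp_snd).mul
      (((measurable_PSI α).comp (measurable_fst.sub measurable_snd)).aemeasurable)
  apply Integrable.mono (kernel_int α hα f g hf hg) hmeas
  refine Filter.Eventually.of_forall fun p => ?_
  rw [Real.norm_eq_abs, Real.norm_eq_abs, abs_mul, abs_mul (f p.1 * g p.2)]
  exact mul_le_mul_of_nonneg_left
    ((abs_PSI_le_PHI α _).trans (le_abs_self _)) (abs_nonneg _)

lemma inner_t (α : ℝ) (g : ℝ → ℝ) (x : ℝ) (hx : x ∈ Icc (0:ℝ) 1)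
    (hgint : Integrable (fun t => g t * PSI α (x - t)) (volume.restrict (Icc (0:ℝ) 1))) :
    ∫ t in (0:ℝ)..x, g t * (x - t) ^ (α - 1)
      = ∫ t in Icc (0:ℝ) 1, g t * PSI α (x - t) := by
  have h0x : (0:ℝ) ≤ x := hx.1
  have hx1 : x ≤ 1 := hx.2
  have hIoc : IntegrableOn (fun t => g t * PSI α (x - t)) (Ioc 0 x) volume :=
    IntegrableOn.mono_set hgint (Ioc_subset_Icc_self.trans (Icc_subset_Icc le_rfl hx1))
  have hIoc2 : IntegrableOn (fun t => g t * PSI α (x - t)) (Ioc x 1) volume :=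
    IntegrableOn.mono_set hgint ((Ioc_subset_Icc_self).trans (Icc_subset_Icc h0x le_rfl))
  rw [intervalIntegral.integral_of_le h0x]
  have e1 : ∫ t in Ioc 0 x, g t * (x - t) ^ (α - 1)
      = ∫ t in Ioc 0 x, g t * PSI α (x - t) := by
    apply setIntegral_congr_ae measurableSet_Ioc
    have hne : ∀ᵐ t : ℝ ∂volume, t ≠ x := by
      rw [ae_iff]
      have : {t : ℝ | ¬t ≠ x} = {x} := by ext t; simp
      rw [this]
      exact measure_singleton x
    filter_upwards [hne] with t htne hmem
    have hlt : 0 < x - t := sub_pos.2 (lt_of_le_of_ne hmem.2 htne)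
    simp [PSI, hlt]
  have e2 : ∫ t in Ioc x 1, g t * PSI α (x - t) = 0 := by
    apply setIntegral_eq_zero_of_forall_eq_zero
    intro t ht
    have : ¬(0 < x - t) := by simp; linarith [ht.1]
    simp [PSI, this]
  rw [e1, integral_Icc_eq_integral_Ioc, ← Ioc_union_Ioc_eq_Ioc h0x hx1,
    setIntegral_union (Ioc_disjoint_Ioc_of_le le_rfl) measurableSet_Ioc hIoc hIoc2, e2, add_zero]

lemma inner_x (α : ℝ) (f : ℝ → ℝ) (t : ℝ) (ht : t ∈ Icc (0:ℝ) 1)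
    (hfint : Integrable (fun x => f x * PSI α (x - t)) (volume.restrict (Icc (0:ℝ) 1))) :
    ∫ x in t..(1:ℝ), f x * (x - t) ^ (α - 1)
      = ∫ x in Icc (0:ℝ) 1, f x * PSI α (x - t) := by
  have h0t : (0:ℝ) ≤ t := ht.1
  have ht1 : t ≤ 1 := ht.2
  have hIoc : IntegrableOn (fun x => f x * PSI α (x - t)) (Ioc t 1) volume :=
    IntegrableOn.mono_set hfint ((Ioc_subset_Icc_self).trans (Icc_subset_Icc h0t le_rfl))
  have hIoc2 : IntegrableOn (fun x => f x * PSI α (x - t)) (Ioc 0 t) volume :=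
    IntegrableOn.mono_set hfint ((Ioc_subset_Icc_self).trans (Icc_subset_Icc le_rfl ht1))
  rw [intervalIntegral.integral_of_le ht1]
  have e1 : ∫ x in Ioc t 1, f x * (x - t) ^ (α - 1)
      = ∫ x in Ioc t 1, f x * PSI α (x - t) := by
    apply setIntegral_congr_fun measurableSet_Ioc
    intro x hx
    have hlt : 0 < x - t := sub_pos.2 hx.1
    simp [PSI, hlt]
  have e2 : ∫ x in Ioc 0 t, f x * PSI α (x - t) = 0 := by
    apply setIntegral_eq_zero_of_forall_eq_zero
    intro x hx
    have : ¬(0 < x - t) := by simp; linarith [hx.2]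
    simp [PSI, this]
  rw [e1, integral_Icc_eq_integral_Ioc, ← Ioc_union_Ioc_eq_Ioc h0t ht1,
    setIntegral_union (Ioc_disjoint_Ioc_of_le le_rfl) measurableSet_Ioc hIoc2 hIoc, e2, zero_add]

/-- Fractional integration by parts: for `α > 0` and `f, g ∈ L²([0,1])`, the kernel
`(x,t) ↦ f x * g t * (x−t)₊^(α−1)` is integrable on `[0,1]²` and
`∫₀¹ f (I^α_{0+} g) = ∫₀¹ (I^α_{1−} f) g`. -/
theorem fractional_integration_by_parts
    (α : ℝ) (hα : 0 < α) (f g : ℝ → ℝ)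
    (hf : MemLp f 2 (volume.restrict (Icc (0:ℝ) 1)))
    (hg : MemLp g 2 (volume.restrict (Icc (0:ℝ) 1))) :
    IntegrableOn
      (fun p : ℝ × ℝ => f p.1 * g p.2 * (max (p.1 - p.2) 0) ^ (α - 1))
      (Icc (0:ℝ) 1 ×ˢ Icc (0:ℝ) 1) ∧
    (1 / Real.Gamma α) * ∫ x in (0:ℝ)..1, f x * ∫ t in (0:ℝ)..x, g t * (x - t) ^ (α - 1)
      = (1 / Real.Gamma α) * ∫ t in (0:ℝ)..1, g t * ∫ x in t..(1:ℝ), f x * (x - t) ^ (α - 1) := by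
  constructor
  · have h := kernel_int α hα f g hf hg
    rw [Measure.prod_restrict] at h
    show Integrable _ (volume.restrict _)
    rw [Measure.volume_eq_prod]
    exact h
  · congr 1
    set μ := volume.restrict (Icc (0:ℝ) 1) with hμ
    have hK := kernelPSI_int α hα f g hf hg
    have hfub : (∫ x, ∫ t, f x * g t * PSI α (x - t) ∂μ ∂μ)
        = ∫ t, ∫ x, f x * g t * PSI α (x - t) ∂μ ∂μ :=
      integral_integral_swap hK
    have hL : (∫ x in (0:ℝ)..1, f x * ∫ t in (0:ℝ)..x, g t * (x - t) ^ (α - 1))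
        = ∫ x, ∫ t, f x * g t * PSI α (x - t) ∂μ ∂μ := by
      rw [intervalIntegral.integral_of_le zero_le_one, ← integral_Icc_eq_integral_Ioc]
      apply integral_congr_ae
      filter_upwards [ae_restrict_mem measurableSet_Icc, hK.prod_right_ae] with x hx hix
      by_cases hfx : f x = 0
      · simp [hfx]
      · have hgint : Integrable (fun t => g t * PSI α (x - t)) μ := by
          have h2 := hix.const_mul (f x)⁻¹
          apply h2.congr
          refine Filter.Eventually.of_forall fun t => ?_
          field_simp
        rw [inner_t α g x hx hgint]
        simp only [mul_assoc]
        exact (integral_const_mul _ _).symm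
    have hR : (∫ t in (0:ℝ)..1, g t * ∫ x in t..(1:ℝ), f x * (x - t) ^ (α - 1))
        = ∫ t, ∫ x, f x * g t * PSI α (x - t) ∂μ ∂μ := by
      rw [intervalIntegral.integral_of_le zero_le_one, ← integral_Icc_eq_integral_Ioc]
      apply integral_congr_ae
      filter_upwards [ae_restrict_mem measurableSet_Icc, hK.prod_left_ae] with t ht hit
      by_cases hgt : g t = 0
      · simp [hgt]
      · have hfint : Integrable (fun x => f x * PSI α (x - t)) μ := by
          have h2 := hit.const_mul (g t)⁻¹
          apply h2.congr
          refine Filter.Eventually.of_forall fun x => ?_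
          field_simp
        rw [inner_x α f t ht hfint]
        simp_rw [show ∀ x, f x * g t * PSI α (x - t) = g t * (f x * PSI α (x - t)) from
          fun x => by ring]
        exact (integral_const_mul _ _).symm
    rw [hL, hR, hfub]
end

section
/- Let μ be a probability measure on a separable real Hilbert space H, let k ≥ 1, and let F : H → ℝ be k times continuously Fréchet differentiable with F and all its derivatives up to order k bounded. Then for every t ≥ 0 the function P_t F is k times Fréchet differentiable and its k-th derivative satisfies the commutation relation ∇^{(k)}(P_t F)(u) = e^{−kt} ∫_H ∇^{(k)}F(e^{−t} u + √(1−e^{−2t}) v) dμ(v) = e^{−kt} P_t(∇^{(k)}F)(u) for all u ∈ H (an equality of continuous k-multilinear forms on H). -/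
set_option maxHeartbeats 1000000
set_option synthInstance.maxHeartbeats 400000
set_option linter.unusedSectionVars false
open MeasureTheory Real Topology Filter Set Fin

universe u w

section Aux

variable {H : Type u} [NormedAddCommGroup H] [InnerProductSpace ℝ H] [CompleteSpace H]
  [TopologicalSpace.SeparableSpace H] [MeasurableSpace H] [BorelSpace H]

lemma mehler_integrable {E : Type*} [NormedAddCommGroup E]
    (μ : Measure H) [IsProbabilityMeasure μ] (a b : ℝ)
    {G : H → E} (hG : Continuous G) {C : ℝ} (hC : ∀ x, ‖G x‖ ≤ C) (u : H) :
    Integrable (fun v => G (a • u + b • v)) μ := by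
  haveI : SecondCountableTopology H := UniformSpace.secondCountable_of_separable H
  refine ⟨(hG.comp (by fun_prop)).aestronglyMeasurable, ?_⟩
  exact HasFiniteIntegral.of_bounded (C := C) (ae_of_all _ fun v => hC _)

lemma mehler_step {E : Type*} [NormedAddCommGroup E] [NormedSpace ℝ E] [CompleteSpace E]
    (μ : Measure H) [IsProbabilityMeasure μ] (a b : ℝ)
    (Φ : H → E) (hΦ : ContDiff ℝ 1 Φ) {C0 C1 : ℝ}
    (hC0 : ∀ x, ‖Φ x‖ ≤ C0) (hC1 : ∀ x, ‖fderiv ℝ Φ x‖ ≤ C1) (u : H) :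
    HasFDerivAt (fun u => ∫ v, Φ (a • u + b • v) ∂μ)
      (a • ∫ v, fderiv ℝ Φ (a • u + b • v) ∂μ) u := by
  haveI : SecondCountableTopology H := UniformSpace.secondCountable_of_separable H
  have hΦc : Continuous Φ := hΦ.continuous
  have hΦ'c : Continuous (fderiv ℝ Φ) := hΦ.continuous_fderiv one_ne_zero
  have key : HasFDerivAt (fun u => ∫ v, Φ (a • u + b • v) ∂μ)
      (∫ v, a • fderiv ℝ Φ (a • u + b • v) ∂μ) u := by
    apply hasFDerivAt_integral_of_dominated_of_fderiv_le
      (F' := fun (x : H) (v : H) => a • fderiv ℝ Φ (a • x + b • v))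
      (bound := fun _ => |a| * C1) (s := Set.univ) Filter.univ_mem
    · filter_upwards with x
      exact (mehler_integrable μ a b hΦc hC0 x).1
    · exact mehler_integrable μ a b hΦc hC0 u
    · exact ((mehler_integrable μ a b hΦ'c hC1 u).1).const_smul a
    · filter_upwards with v x _
      refine (ContinuousLinearMap.opNorm_smul_le a _).trans ?_
      rw [Real.norm_eq_abs]
      exact mul_le_mul_of_nonneg_left (hC1 _) (abs_nonneg a)
    · exact integrable_const _
    · filter_upwards with v x _
      have h1 : HasFDerivAt (fun x : H => a • x + b • v)
          (a • ContinuousLinearMap.id ℝ H) x :=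
        ((hasFDerivAt_id x).const_smul a).add_const (b • v)
      have h2 : HasFDerivAt Φ (fderiv ℝ Φ (a • x + b • v)) (a • x + b • v) :=
        (hΦ.differentiable one_ne_zero _).hasFDerivAt
      have := h2.comp x h1
      convert this using 1
      ext y
      simp
      ext y
      simp
  rwa [integral_smul] at key

lemma mehler_zero {E : Type*} [NormedAddCommGroup E] [NormedSpace ℝ E] [CompleteSpace E]
    (μ : Measure H) [IsProbabilityMeasure μ] (a b : ℝ)
    (Φ : H → E) (hΦc : Continuous Φ) {C : ℝ} (hC : ∀ x, ‖Φ x‖ ≤ C) :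
    ContDiff ℝ (0 : ℕ) (fun u => ∫ v, Φ (a • u + b • v) ∂μ) ∧
    ∀ u, iteratedFDeriv ℝ 0 (fun u => ∫ v, Φ (a • u + b • v) ∂μ) u
      = a ^ 0 • ∫ v, iteratedFDeriv ℝ 0 Φ (a • u + b • v) ∂μ := by
  haveI : SecondCountableTopology H := UniformSpace.secondCountable_of_separable H
  constructor
  · rw [show ((0 : ℕ) : WithTop ℕ∞) = 0 by rfl, contDiff_zero]
    apply continuous_of_dominated (bound := fun _ => C)
    · exact fun x => (mehler_integrable μ a b hΦc hC x).1
    · exact fun x => ae_of_all _ fun v => hC _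
    · exact integrable_const _
    · filter_upwards with v
      exact hΦc.comp (by fun_prop)
  · intro u
    have hint : Integrable (fun v => iteratedFDeriv ℝ 0 Φ (a • u + b • v)) μ := by
      have hc : Continuous (iteratedFDeriv ℝ 0 Φ) :=
        (contDiff_zero.mpr hΦc).continuous_iteratedFDeriv le_rfl
      exact mehler_integrable μ a b hc (C := C)
        (fun x => by rw [norm_iteratedFDeriv_zero]; exact hC x) u
    ext m
    rw [iteratedFDeriv_zero_apply, pow_zero, one_smul,
      ContinuousMultilinearMap.integral_apply hint]
    simp [iteratedFDeriv_zero_apply]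

lemma mehler_succ {E : Type*} [NormedAddCommGroup E] [NormedSpace ℝ E] [CompleteSpace E]
    (μ : Measure H) [IsProbabilityMeasure μ] (a b : ℝ) (n : ℕ)
    (Φ : H → E) (hΦ : ContDiff ℝ (n + 1 : ℕ) Φ)
    (hb : ∀ i ≤ n + 1, ∃ C, ∀ x, ‖iteratedFDeriv ℝ i Φ x‖ ≤ C)
    (IH : ContDiff ℝ (n : ℕ) (fun u => ∫ v, fderiv ℝ Φ (a • u + b • v) ∂μ) ∧
      ∀ u, iteratedFDeriv ℝ n (fun u => ∫ v, fderiv ℝ Φ (a • u + b • v) ∂μ) u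
        = a ^ n • ∫ v, iteratedFDeriv ℝ n (fderiv ℝ Φ) (a • u + b • v) ∂μ) :
    ContDiff ℝ (n + 1 : ℕ) (fun u => ∫ v, Φ (a • u + b • v) ∂μ) ∧
    ∀ u, iteratedFDeriv ℝ (n + 1) (fun u => ∫ v, Φ (a • u + b • v) ∂μ) u
      = a ^ (n + 1) • ∫ v, iteratedFDeriv ℝ (n + 1) Φ (a • u + b • v) ∂μ := by
  haveI : SecondCountableTopology H := UniformSpace.secondCountable_of_separable H
  obtain ⟨C0, hC0⟩ := hb 0 (Nat.zero_le _)
  obtain ⟨C1, hC1'⟩ := hb 1 (Nat.one_le_iff_ne_zero.mpr (Nat.succ_ne_zero n))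
  have hC0' : ∀ x, ‖Φ x‖ ≤ C0 := fun x => by
    have := hC0 x; rwa [norm_iteratedFDeriv_zero] at this
  have hC1 : ∀ x, ‖fderiv ℝ Φ x‖ ≤ C1 := fun x => by
    have := hC1' x
    rwa [show (1 : ℕ) = 0 + 1 by rfl, ← norm_iteratedFDeriv_fderiv,
      norm_iteratedFDeriv_zero] at this
  have hΦ1 : ContDiff ℝ 1 Φ := hΦ.of_le (by exact_mod_cast Nat.succ_le_succ (Nat.zero_le n))
  have hD : ∀ u, HasFDerivAt (fun u => ∫ v, Φ (a • u + b • v) ∂μ)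
      (a • ∫ v, fderiv ℝ Φ (a • u + b • v) ∂μ) u :=
    fun u => mehler_step μ a b Φ hΦ1 hC0' hC1 u
  have hfd : fderiv ℝ (fun u => ∫ v, Φ (a • u + b • v) ∂μ)
      = fun u => a • ∫ v, fderiv ℝ Φ (a • u + b • v) ∂μ :=
    funext fun u => (hD u).fderiv
  have hΦ' : ContDiff ℝ (n : ℕ) (fderiv ℝ Φ) := by
    rw [show ((n + 1 : ℕ) : WithTop ℕ∞) = (n : WithTop ℕ∞) + 1 by push_cast; ring] at hΦ
    exact (contDiff_succ_iff_fderiv.mp hΦ).2.2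
  have hsmooth : ContDiff ℝ (n + 1 : ℕ) (fun u => ∫ v, Φ (a • u + b • v) ∂μ) := by
    rw [show ((n + 1 : ℕ) : WithTop ℕ∞) = (n : WithTop ℕ∞) + 1 by push_cast; ring,
      contDiff_succ_iff_fderiv]
    refine ⟨fun u => (hD u).differentiableAt, by simp, ?_⟩
    rw [hfd]
    exact IH.1.const_smul a
  refine ⟨hsmooth, fun u => ?_⟩
  -- integrability facts
  have hJc : Continuous (iteratedFDeriv ℝ n (fderiv ℝ Φ)) := hΦ'.continuous_iteratedFDeriv le_rfl
  obtain ⟨Cn, hCn⟩ := hb (n + 1) le_rfl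
  have hJb : ∀ x, ‖iteratedFDeriv ℝ n (fderiv ℝ Φ) x‖ ≤ Cn := fun x => by
    rw [norm_iteratedFDeriv_fderiv]; exact hCn x
  have hJint : Integrable (fun v => iteratedFDeriv ℝ n (fderiv ℝ Φ) (a • u + b • v)) μ :=
    mehler_integrable μ a b hJc hJb u
  have hKc : Continuous (iteratedFDeriv ℝ (n + 1) Φ) := hΦ.continuous_iteratedFDeriv le_rfl
  have hKint : Integrable (fun v => iteratedFDeriv ℝ (n + 1) Φ (a • u + b • v)) μ :=
    mehler_integrable μ a b hKc hCn u
  ext m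
  rw [iteratedFDeriv_succ_apply_right, hfd,
    iteratedFDeriv_const_smul_apply' (hf := IH.1.contDiffAt), IH.2 u]
  have hJint' : Integrable
      (fun v => iteratedFDeriv ℝ n (fderiv ℝ Φ) (a • u + b • v) (init m)) μ :=
    (ContinuousMultilinearMap.apply ℝ _ _ (init m)).integrable_comp hJint
  rw [ContinuousMultilinearMap.smul_apply, ContinuousMultilinearMap.smul_apply,
    ContinuousLinearMap.smul_apply, ContinuousLinearMap.smul_apply,
    ContinuousMultilinearMap.integral_apply hJint,
    ContinuousLinearMap.integral_apply hJint',
    ContinuousMultilinearMap.smul_apply,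
    ContinuousMultilinearMap.integral_apply hKint]
  rw [smul_smul, ← pow_succ']
  congr 1
  apply integral_congr_ae
  filter_upwards with v
  rw [iteratedFDeriv_succ_apply_right]

lemma mehler_aux (μ : Measure H) [IsProbabilityMeasure μ] (a b : ℝ) :
    ∀ (n : ℕ) {E : Type (max u w)} [NormedAddCommGroup E] [NormedSpace ℝ E] [CompleteSpace E]
      (Φ : H → E), ContDiff ℝ (n : ℕ) Φ →
      (∀ i ≤ n, ∃ C, ∀ x, ‖iteratedFDeriv ℝ i Φ x‖ ≤ C) →
      ContDiff ℝ (n : ℕ) (fun u => ∫ v, Φ (a • u + b • v) ∂μ) ∧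
      ∀ u, iteratedFDeriv ℝ n (fun u => ∫ v, Φ (a • u + b • v) ∂μ) u
        = a ^ n • ∫ v, iteratedFDeriv ℝ n Φ (a • u + b • v) ∂μ := by
  intro n
  induction n with
  | zero =>
    intro E _ _ _ Φ hΦ hb
    obtain ⟨C, hC⟩ := hb 0 le_rfl
    exact mehler_zero μ a b Φ hΦ.continuous
      (fun x => by have := hC x; rwa [norm_iteratedFDeriv_zero] at this)
  | succ n ih =>
    intro E _ _ _ Φ hΦ hb
    have hΦ' : ContDiff ℝ (n : ℕ) (fderiv ℝ Φ) := by
      have := hΦ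
      rw [show ((n + 1 : ℕ) : WithTop ℕ∞) = (n : WithTop ℕ∞) + 1 by push_cast; ring] at this
      exact (contDiff_succ_iff_fderiv.mp this).2.2
    have hb' : ∀ i ≤ n, ∃ C, ∀ x, ‖iteratedFDeriv ℝ i (fderiv ℝ Φ) x‖ ≤ C := by
      intro i hi
      obtain ⟨C, hC⟩ := hb (i + 1) (Nat.succ_le_succ hi)
      exact ⟨C, fun x => by rw [norm_iteratedFDeriv_fderiv]; exact hC x⟩
    exact mehler_succ μ a b n Φ hΦ hb (ih (fderiv ℝ Φ) hΦ' hb')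

end Aux

/-- Commutation of the Mehler (Ornstein–Uhlenbeck) semigroup with iterated derivatives:
if `F : H → ℝ` is `C^k` with `F` and all derivatives up to order `k` bounded, then for
`t ≥ 0` the function `P_t F` is `C^k` and
`∇^{(k)}(P_t F)(u) = e^{−kt} ∫ ∇^{(k)}F(e^{−t}u + √(1−e^{−2t})v) dμ(v) = e^{−kt} P_t(∇^{(k)}F)(u)`. -/
theorem mehler_semigroup_iteratedFDeriv_comm
    {H : Type*} [NormedAddCommGroup H] [InnerProductSpace ℝ H] [CompleteSpace H]
    [TopologicalSpace.SeparableSpace H] [MeasurableSpace H] [BorelSpace H]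
    (μ : Measure H) [IsProbabilityMeasure μ]
    (k : ℕ) (hk : 1 ≤ k) (F : H → ℝ)
    (hF : ContDiff ℝ k F)
    (hFb : ∀ i ≤ k, ∃ C, ∀ u, ‖iteratedFDeriv ℝ i F u‖ ≤ C)
    (t : ℝ) (ht : 0 ≤ t) :
    ContDiff ℝ k
      (fun u => ∫ v, F (Real.exp (-t) • u + Real.sqrt (1 - Real.exp (-2 * t)) • v) ∂μ) ∧
    ∀ u : H,
      iteratedFDeriv ℝ k
          (fun u => ∫ v, F (Real.exp (-t) • u + Real.sqrt (1 - Real.exp (-2 * t)) • v) ∂μ) u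
        = Real.exp (-(k : ℝ) * t) •
            ∫ v, iteratedFDeriv ℝ k F
              (Real.exp (-t) • u + Real.sqrt (1 - Real.exp (-2 * t)) • v) ∂μ := by
  obtain ⟨n, rfl⟩ : ∃ n, k = n + 1 := ⟨k - 1, (Nat.succ_pred_eq_of_pos hk).symm⟩
  set a := Real.exp (-t)
  set b := Real.sqrt (1 - Real.exp (-2 * t))
  have hΦ' : ContDiff ℝ (n : ℕ) (fderiv ℝ F) := by
    have := hF
    rw [show ((n + 1 : ℕ) : WithTop ℕ∞) = (n : WithTop ℕ∞) + 1 by push_cast; ring] at this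
    exact (contDiff_succ_iff_fderiv.mp this).2.2
  have hb' : ∀ i ≤ n, ∃ C, ∀ x, ‖iteratedFDeriv ℝ i (fderiv ℝ F) x‖ ≤ C := by
    intro i hi
    obtain ⟨C, hC⟩ := hFb (i + 1) (Nat.succ_le_succ hi)
    exact ⟨C, fun x => by rw [norm_iteratedFDeriv_fderiv]; exact hC x⟩
  have IH := mehler_aux μ a b n (fderiv ℝ F) hΦ' hb'
  have main := mehler_succ μ a b n F hF hFb IH
  refine ⟨main.1, fun u => ?_⟩
  rw [main.2 u]
  congr 1
  rw [show -((n + 1 : ℕ) : ℝ) * t = ((n + 1 : ℕ) : ℝ) * (-t) by ring, ← Real.exp_nat_mul]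
end

section
/- Let μ be a probability measure on a separable real Hilbert space H, let k ≥ 1, and let F : H → ℝ be k times continuously Fréchet differentiable with F and all its derivatives up to order k bounded. Then ∫_0^∞ sup_{u∈H} ‖∇^{(k)}(P_t F)(u)‖ dt ≤ (1/k) · sup_{u∈H} ‖∇^{(k)}F(u)‖, where ‖·‖ denotes the norm of a continuous k-multilinear form on H. -/
open MeasureTheory Real


lemma integral_exp_neg_mul_Ioi_aux {b : ℝ} (hb : 0 < b) :
    ∫ x in Set.Ioi (0:ℝ), Real.exp (-b * x) = 1 / b := by
  have h : ∀ x ∈ Set.Ici (0:ℝ), HasDerivAt (fun x => -Real.exp (-b * x) / b)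
      (Real.exp (-b * x)) x := by
    intro x _
    have h1 : HasDerivAt (fun x : ℝ => -b * x) (-b) x := by
      simpa using (hasDerivAt_id x).const_mul (-b)
    have h2 := h1.exp
    have h3 := h2.neg.div_const b
    have h4 : -(Real.exp (-b * x) * -b) / b = Real.exp (-b * x) := by
      rw [mul_neg, neg_neg, mul_div_assoc, div_self hb.ne', mul_one]
    exact h4 ▸ h3
  have htend : Filter.Tendsto (fun x : ℝ => -Real.exp (-b * x) / b) Filter.atTop (nhds 0) := by
    have h0 : Filter.Tendsto (fun x : ℝ => Real.exp (-b * x)) Filter.atTop (nhds 0) := by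
      have : Filter.Tendsto (fun x : ℝ => b * x) Filter.atTop Filter.atTop :=
        Filter.Tendsto.const_mul_atTop hb Filter.tendsto_id
      simpa [neg_mul, Real.exp_neg, Function.comp_def] using
        (Real.tendsto_exp_neg_atTop_nhds_zero.comp this)
    have := h0.neg.div_const b
    simpa using this
  rw [MeasureTheory.integral_Ioi_of_hasDerivAt_of_tendsto' h
    (exp_neg_integrableOn_Ioi 0 hb) htend]
  field_simp
  simp

section Aux

variable {H : Type*} [NormedAddCommGroup H] [InnerProductSpace ℝ H] [CompleteSpace H]
    [TopologicalSpace.SeparableSpace H] [MeasurableSpace H] [BorelSpace H]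
    (μ : Measure H) [IsProbabilityMeasure μ]

lemma aux_integrable {E : Type*} [NormedAddCommGroup E] (g : H → E)
    (hg : Continuous g) {C : ℝ} (hgb : ∀ x, ‖g x‖ ≤ C) (c : ℝ) (w : H) :
    Integrable (fun v => g (w + c • v)) μ := by
  haveI : SecondCountableTopology H := UniformSpace.secondCountable_of_separable H
  refine ⟨((hg.comp (continuous_const.add (continuous_id.const_smul c)))).aestronglyMeasurable, ?_⟩
  exact HasFiniteIntegral.of_bounded (C := C) (Filter.Eventually.of_forall fun v => hgb _)

lemma aux_hasFDerivAt (k : ℕ) (F : H → ℝ) (hF : ContDiff ℝ k F)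
    (hFb : ∀ i ≤ k, ∃ C, ∀ u, ‖iteratedFDeriv ℝ i F u‖ ≤ C) (c : ℝ)
    {i : ℕ} (hi : i < k) (w : H) :
    HasFDerivAt (fun x => ∫ v, iteratedFDeriv ℝ i F (x + c • v) ∂μ)
      (∫ v, fderiv ℝ (iteratedFDeriv ℝ i F) (w + c • v) ∂μ) w := by
  haveI : SecondCountableTopology H := UniformSpace.secondCountable_of_separable H
  have hik : (i : WithTop ℕ∞) ≤ k := by exact_mod_cast hi.le
  have hik1 : ((i+1 : ℕ) : WithTop ℕ∞) ≤ k := by exact_mod_cast hi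
  have conti : Continuous (iteratedFDeriv ℝ i F) := hF.continuous_iteratedFDeriv hik
  have diffi : Differentiable ℝ (iteratedFDeriv ℝ i F) :=
    hF.differentiable_iteratedFDeriv (by exact_mod_cast hi)
  have conti' : Continuous (fderiv ℝ (iteratedFDeriv ℝ i F)) := by
    rw [fderiv_iteratedFDeriv]
    exact (LinearIsometryEquiv.continuous _).comp (hF.continuous_iteratedFDeriv hik1)
  obtain ⟨Ci, hCi⟩ := hFb i hi.le
  obtain ⟨Ci1, hCi1⟩ := hFb (i+1) hi
  have hnorm : ∀ y, ‖fderiv ℝ (iteratedFDeriv ℝ i F) y‖ = ‖iteratedFDeriv ℝ (i+1) F y‖ := by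
    intro y
    rw [iteratedFDeriv_succ_eq_comp_left]
    simp [LinearIsometryEquiv.norm_map]
  apply hasFDerivAt_integral_of_dominated_of_fderiv_le
    (F' := fun x v => fderiv ℝ (iteratedFDeriv ℝ i F) (x + c • v))
    (bound := fun _ => Ci1) (s := Set.univ) Filter.univ_mem
  · exact Filter.Eventually.of_forall fun x =>
      (aux_integrable μ _ conti hCi c x).aestronglyMeasurable
  · exact aux_integrable μ _ conti hCi c w
  · exact (aux_integrable μ _ conti' (fun y => (hnorm y).le.trans (hCi1 y)) c w).aestronglyMeasurable
  · refine ae_of_all _ fun v x _ => ?_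
    rw [hnorm]; exact hCi1 _
  · exact integrable_const Ci1
  · refine ae_of_all _ fun v x _ => ?_
    have h1 := (diffi (x + c • v)).hasFDerivAt
    have h2 : HasFDerivAt (fun y : H => y + c • v) (ContinuousLinearMap.id ℝ H) x :=
      (hasFDerivAt_id x).add_const _
    simpa [Function.comp_def] using h1.comp x h2


lemma aux_identity (k : ℕ) (F : H → ℝ) (hF : ContDiff ℝ k F)
    (hFb : ∀ i ≤ k, ∃ C, ∀ u, ‖iteratedFDeriv ℝ i F u‖ ≤ C) (c : ℝ) :
    ∀ i, i ≤ k → ∀ w : H, iteratedFDeriv ℝ i (fun x => ∫ v, F (x + c • v) ∂μ) w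
      = ∫ v, iteratedFDeriv ℝ i F (w + c • v) ∂μ := by
  haveI : SecondCountableTopology H := UniformSpace.secondCountable_of_separable H
  intro i
  induction i with
  | zero =>
    intro _ w
    obtain ⟨C, hC⟩ := hFb 0 (Nat.zero_le _)
    have hFbd : ∀ u, ‖F u‖ ≤ C := by
      intro u; simpa [norm_iteratedFDeriv_zero] using hC u
    have hint : Integrable (fun v => F (w + c • v)) μ :=
      aux_integrable μ F (hF.continuous) hFbd c w
    rw [iteratedFDeriv_zero_eq_comp]
    simp only [Function.comp_apply]
    rw [show (fun v => iteratedFDeriv ℝ 0 F (w + c • v))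
        = fun v => (continuousMultilinearCurryFin0 ℝ H ℝ).symm (F (w + c • v)) from
      funext fun v => by rw [iteratedFDeriv_zero_eq_comp]; rfl]
    exact (((continuousMultilinearCurryFin0 ℝ H ℝ).symm.toContinuousLinearEquiv).integral_comp_comm
      (fun v => F (w + c • v))).symm
  | succ i ih =>
    intro hik w
    have hik' : i ≤ k := Nat.le_of_succ_le hik
    have hilt : i < k := hik
    have hfd := aux_hasFDerivAt μ k F hF hFb c hilt
    have heq : iteratedFDeriv ℝ i (fun x => ∫ v, F (x + c • v) ∂μ)
        = fun x => ∫ v, iteratedFDeriv ℝ i F (x + c • v) ∂μ := funext (ih hik')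
    rw [iteratedFDeriv_succ_eq_comp_left]
    simp only [Function.comp_apply]
    rw [heq, (hfd w).fderiv]
    have hptwise : (fun v => iteratedFDeriv ℝ (i+1) F (w + c • v))
        = fun v => (continuousMultilinearCurryLeftEquiv ℝ (fun _ : Fin (i + 1) => H) ℝ).symm
            (fderiv ℝ (iteratedFDeriv ℝ i F) (w + c • v)) := by
      funext v; rw [iteratedFDeriv_succ_eq_comp_left]; rfl
    rw [hptwise]
    exact (ContinuousLinearEquiv.integral_comp_comm (𝕜 := ℝ) ((continuousMultilinearCurryLeftEquiv ℝ (fun _ : Fin (i + 1) => H)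
      ℝ).symm.toContinuousLinearEquiv)
      (fun v => fderiv ℝ (iteratedFDeriv ℝ i F) (w + c • v))).symm

lemma aux_contDiff (k : ℕ) (F : H → ℝ) (hF : ContDiff ℝ k F)
    (hFb : ∀ i ≤ k, ∃ C, ∀ u, ‖iteratedFDeriv ℝ i F u‖ ≤ C) (c : ℝ) :
    ContDiff ℝ k (fun x => ∫ v, F (x + c • v) ∂μ) := by
  haveI : SecondCountableTopology H := UniformSpace.secondCountable_of_separable H
  rw [show ((k : ℕ) : WithTop ℕ∞) = ((k : ℕ∞) : WithTop ℕ∞) from by exact_mod_cast rfl,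
    contDiff_iff_continuous_differentiable]
  constructor
  · intro m hm
    have hm' : m ≤ k := by exact_mod_cast hm
    rw [funext (aux_identity μ k F hF hFb c m hm')]
    obtain ⟨C, hC⟩ := hFb m hm'
    have hcont : Continuous (iteratedFDeriv ℝ m F) :=
      hF.continuous_iteratedFDeriv (by exact_mod_cast hm')
    apply continuous_of_dominated (bound := fun _ => C)
    · exact fun x => (aux_integrable μ _ hcont hC c x).aestronglyMeasurable
    · exact fun x => ae_of_all _ fun v => hC _
    · exact integrable_const C
    · exact ae_of_all _ fun v =>
        hcont.comp ((continuous_id.add continuous_const))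
  · intro m hm
    have hm' : m < k := by exact_mod_cast hm
    rw [funext (aux_identity μ k F hF hFb c m hm'.le)]
    exact fun w => (aux_hasFDerivAt μ k F hF hFb c hm' w).differentiableAt

end Aux

/-- Integrated gradient bound for the Mehler (Ornstein–Uhlenbeck) semigroup: if
`F : H → ℝ` is `C^k` with `F` and all derivatives up to order `k` bounded, then
`∫₀^∞ sup_u ‖∇^{(k)}(P_t F)(u)‖ dt ≤ (1/k) sup_u ‖∇^{(k)}F(u)‖`. -/
theorem mehler_semigroup_iteratedFDeriv_integral_bound
    {H : Type*} [NormedAddCommGroup H] [InnerProductSpace ℝ H] [CompleteSpace H]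
    [TopologicalSpace.SeparableSpace H] [MeasurableSpace H] [BorelSpace H]
    (μ : Measure H) [IsProbabilityMeasure μ]
    (k : ℕ) (hk : 1 ≤ k) (F : H → ℝ)
    (hF : ContDiff ℝ k F)
    (hFb : ∀ i ≤ k, ∃ C, ∀ u, ‖iteratedFDeriv ℝ i F u‖ ≤ C) :
    (∫ t in Set.Ioi (0:ℝ),
        ⨆ u : H, ‖iteratedFDeriv ℝ k
          (fun w => ∫ v, F (Real.exp (-t) • w + Real.sqrt (1 - Real.exp (-2 * t)) • v) ∂μ) u‖)
      ≤ (1 / (k : ℝ)) * ⨆ u : H, ‖iteratedFDeriv ℝ k F u‖ := by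
  haveI : SecondCountableTopology H := UniformSpace.secondCountable_of_separable H
  obtain ⟨M₀, hM₀⟩ := hFb k le_rfl
  set M := ⨆ u : H, ‖iteratedFDeriv ℝ k F u‖ with hMdef
  have hbdd : BddAbove (Set.range fun u : H => ‖iteratedFDeriv ℝ k F u‖) :=
    ⟨M₀, by rintro x ⟨u, rfl⟩; exact hM₀ u⟩
  have hMle : ∀ u, ‖iteratedFDeriv ℝ k F u‖ ≤ M := fun u => le_ciSup hbdd u
  have hM0 : 0 ≤ M := Real.iSup_nonneg fun u => norm_nonneg _
  have hkpos : (0:ℝ) < (k:ℝ) := by exact_mod_cast hk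
  have hpt : ∀ t : ℝ,
      (⨆ u : H, ‖iteratedFDeriv ℝ k
        (fun w => ∫ v, F (Real.exp (-t) • w + Real.sqrt (1 - Real.exp (-2 * t)) • v) ∂μ) u‖)
      ≤ M * Real.exp (-(k:ℝ) * t) := by
    intro t
    set c := Real.sqrt (1 - Real.exp (-2 * t)) with hc
    set a := Real.exp (-t) with ha
    have ha0 : 0 < a := Real.exp_pos _
    set Φ : H → ℝ := fun x => ∫ v, F (x + c • v) ∂μ with hΦ
    have hΦk : ContDiff ℝ k Φ := aux_contDiff μ k F hF hFb c
    set L : H →L[ℝ] H := a • ContinuousLinearMap.id ℝ H with hL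
    have hLnorm : ‖L‖ ≤ a := by
      calc ‖L‖ ≤ ‖a‖ * ‖ContinuousLinearMap.id ℝ H‖ := ContinuousLinearMap.opNorm_smul_le a _
        _ ≤ a * 1 := by
            apply mul_le_mul (le_of_eq (by rw [Real.norm_eq_abs, abs_of_pos ha0]))
              ContinuousLinearMap.norm_id_le (norm_nonneg _) ha0.le
        _ = a := mul_one a
    have hcomp : (fun w : H => ∫ v, F (a • w + c • v) ∂μ) = Φ ∘ L := by
      funext w
      simp only [hΦ, Function.comp_apply, hL, ContinuousLinearMap.smul_apply,
        ContinuousLinearMap.coe_id', id_eq]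
    apply Real.iSup_le _ (by positivity)
    intro u
    rw [hcomp, L.iteratedFDeriv_comp_right hΦk u le_rfl]
    refine le_trans (ContinuousMultilinearMap.norm_compContinuousLinearMap_le _ _) ?_
    have h1 : ‖iteratedFDeriv ℝ k Φ (L u)‖ ≤ M := by
      rw [hΦ, aux_identity μ k F hF hFb c k le_rfl (L u)]
      calc ‖∫ v, iteratedFDeriv ℝ k F (L u + c • v) ∂μ‖
          ≤ M * (μ Set.univ).toReal :=
            norm_integral_le_of_norm_le_const (ae_of_all _ fun v => hMle _)
        _ = M := by simp
    calc ‖iteratedFDeriv ℝ k Φ (L u)‖ * ∏ _i : Fin k, ‖L‖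
        ≤ M * a ^ k := by
          apply mul_le_mul h1 _ (Finset.prod_nonneg fun _ _ => norm_nonneg _) hM0
          rw [Finset.prod_const, Finset.card_univ, Fintype.card_fin]
          exact pow_le_pow_left₀ (norm_nonneg _) hLnorm k
      _ = M * Real.exp (-(k:ℝ) * t) := by
          rw [ha, ← Real.exp_nat_mul]
          ring_nf
  calc (∫ t in Set.Ioi (0:ℝ),
        ⨆ u : H, ‖iteratedFDeriv ℝ k
          (fun w => ∫ v, F (Real.exp (-t) • w + Real.sqrt (1 - Real.exp (-2 * t)) • v) ∂μ) u‖)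
      ≤ ∫ t in Set.Ioi (0:ℝ), M * Real.exp (-(k:ℝ) * t) := by
        apply integral_mono_of_nonneg
        · exact ae_of_all _ fun t => Real.iSup_nonneg fun u => norm_nonneg _
        · exact (exp_neg_integrableOn_Ioi 0 hkpos).const_mul M
        · exact ae_of_all _ fun t => hpt t
    _ = M * (1 / (k:ℝ)) := by
        rw [integral_const_mul, integral_exp_neg_mul_Ioi_aux hkpos]
    _ = (1 / (k:ℝ)) * M := mul_comm _ _
end
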